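/- arXiv:2411.06746 — 6 statements merged into one kernel-verified Lean document; each statement's English description precedes it below -/
import Mathlib

section
/- For every deterministic learning algorithm A mapping labeled samples of size m from a finite domain X to predictors h : X → {0,1}, if m < |X|/2 then there exist a function f : X → {0,1} and a probability distribution D over X × {0,1} such that L_D(f) = 0 and, with probability at least 1/7 over the draw of an i.i.d. sample S ~ D^m, the predictor A(S) satisfies L_D(A(S)) ≥ 1/8. -/
open scoped BigOperators Classical

set_option linter.unusedSectionVars false
set_option maxHeartbeats 1000000

namespace NFLaux
variable {X : Type} [Fintype X] [DecidableEq X]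

noncomputable def D (t : Finset X) (f : X → Bool) (p : X × Bool) : ℝ :=
  if p.1 ∈ t ∧ p.2 = f p.1 then (t.card : ℝ)⁻¹ else 0

lemma D_nonneg (t : Finset X) (f : X → Bool) (p : X × Bool) : 0 ≤ D t f p := by
  unfold D; split <;> positivity

lemma sum_D (t : Finset X) (ht : t.Nonempty) (f : X → Bool) :
    (∑ p : X × Bool, D t f p) = 1 := by
  rw [Fintype.sum_prod_type]
  have h1 : ∀ x : X, (∑ b : Bool, D t f (x, b)) = if x ∈ t then (t.card : ℝ)⁻¹ else 0 := by
    intro x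
    by_cases hx : x ∈ t <;> cases hfx : f x <;> simp [D, Fintype.sum_bool, hx, hfx]
  rw [Finset.sum_congr rfl (fun x _ => h1 x), Finset.sum_ite_mem, Finset.univ_inter,
    Finset.sum_const, nsmul_eq_mul]
  have : (t.card : ℝ) ≠ 0 := by
    have := Finset.card_pos.2 ht
    positivity
  field_simp

noncomputable def risk (t : Finset X) (f h : X → Bool) : ℝ :=
  ∑ p : X × Bool, D t f p * (if h p.1 ≠ p.2 then 1 else 0)

lemma risk_eq (t : Finset X) (f h : X → Bool) :
    risk t f h = (t.card : ℝ)⁻¹ * ∑ c ∈ t, (if h c ≠ f c then (1:ℝ) else 0) := by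
  rw [risk, Fintype.sum_prod_type]
  have h1 : ∀ x : X, (∑ b : Bool, D t f (x, b) * (if h x ≠ b then (1:ℝ) else 0))
      = if x ∈ t then (t.card : ℝ)⁻¹ * (if h x ≠ f x then (1:ℝ) else 0) else 0 := by
    intro x
    by_cases hx : x ∈ t <;> cases hfx : f x <;> cases hhx : h x <;>
      simp [D, Fintype.sum_bool, hx, hfx, hhx]
  rw [Finset.sum_congr rfl (fun x _ => h1 x), Finset.sum_ite_mem, Finset.univ_inter,
    Finset.mul_sum]

lemma risk_self (t : Finset X) (f : X → Bool) : risk t f f = 0 := by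
  rw [risk_eq]; simp

lemma risk_nonneg (t : Finset X) (f h : X → Bool) : 0 ≤ risk t f h := by
  rw [risk_eq]
  have : (0:ℝ) ≤ ∑ c ∈ t, (if h c ≠ f c then (1:ℝ) else 0) :=
    Finset.sum_nonneg (fun c _ => by split <;> norm_num)
  positivity

lemma risk_le_one (t : Finset X) (f h : X → Bool) : risk t f h ≤ 1 := by
  rcases Finset.eq_empty_or_nonempty t with rfl | ht
  · simp [risk_eq]
  rw [risk_eq]
  have h1 : (∑ c ∈ t, (if h c ≠ f c then (1:ℝ) else 0)) ≤ ∑ c ∈ t, (1:ℝ) :=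
    Finset.sum_le_sum (fun c _ => by split <;> norm_num)
  rw [Finset.sum_const, nsmul_eq_mul, mul_one] at h1
  have hc : (0:ℝ) < t.card := by exact_mod_cast Finset.card_pos.2 ht
  calc (t.card : ℝ)⁻¹ * ∑ c ∈ t, (if h c ≠ f c then (1:ℝ) else 0)
      ≤ (t.card : ℝ)⁻¹ * t.card := by
        apply mul_le_mul_of_nonneg_left h1 (by positivity)
    _ = 1 := by field_simp

lemma sum_prod_D {m : ℕ} (t : Finset X) (f : X → Bool) (g : (Fin m → X × Bool) → ℝ) :
    ∑ S : Fin m → X × Bool, (∏ i, D t f (S i)) * g S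
    = ∑ x : Fin m → {y // y ∈ t}, ((t.card : ℝ)⁻¹)^m * g (fun i => (↑(x i), f (x i))) := by
  classical
  set enc : (Fin m → {y // y ∈ t}) → (Fin m → X × Bool) :=
    fun x i => ((x i : X), f (x i)) with henc
  have hinj : Function.Injective enc := by
    intro x y hxy
    funext i
    have := congrFun hxy i
    exact Subtype.ext (congrArg Prod.fst this)
  have h0 : ∀ S ∈ Finset.univ, S ∉ Finset.univ.image enc →
      (∏ i, D t f (S i)) * g S = 0 := by
    intro S _ hS
    by_contra hne
    have hprod : ∀ i, D t f (S i) ≠ 0 := by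
      intro i hi
      exact hne (by rw [Finset.prod_eq_zero (Finset.mem_univ i) hi, zero_mul])
    have hall : ∀ i, (S i).1 ∈ t ∧ (S i).2 = f (S i).1 := by
      intro i
      by_contra hcon
      exact hprod i (by simp [D, hcon])
    apply hS
    refine Finset.mem_image.2 ⟨fun i => ⟨(S i).1, (hall i).1⟩, Finset.mem_univ _, ?_⟩
    funext i
    exact Prod.ext rfl ((hall i).2).symm
  rw [← Finset.sum_subset (Finset.subset_univ (Finset.univ.image enc)) h0,
    Finset.sum_image (fun x _ y _ h => hinj h)]
  apply Finset.sum_congr rfl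
  intro x _
  congr 1
  have : ∀ i : Fin m, D t f (enc x i) = (t.card : ℝ)⁻¹ := by
    intro i
    exact if_pos ⟨(x i).2, rfl⟩
  rw [Finset.prod_congr rfl (fun i _ => this i), Finset.prod_const, Finset.card_univ,
    Fintype.card_fin]

lemma flip_count {m : ℕ} (A : (Fin m → X × Bool) → X → Bool) (t : Finset X)
    (x : Fin m → {y // y ∈ t}) (c : X) (hc : ∀ i, (x i : X) ≠ c) :
    ∑ f : X → Bool, (if A (fun i => (↑(x i), f (x i))) c ≠ f c then (1:ℝ) else 0)
      = (Fintype.card (X → Bool) : ℝ) / 2 := by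
  classical
  set F : (X → Bool) → ℝ :=
    fun f => if A (fun i => (↑(x i), f (x i))) c ≠ f c then (1:ℝ) else 0 with hF
  set σ : (X → Bool) → (X → Bool) := fun f => Function.update f c (!(f c)) with hσ
  have hinv : Function.Involutive σ := by
    intro f
    funext y
    by_cases hy : y = c
    · subst hy; simp [hσ, Function.update_self]
    · simp [hσ, Function.update_of_ne hy]
  have hkey : ∀ f, F f + F (σ f) = 1 := by
    intro f
    have hAeq : (fun i => ((x i : X), σ f (x i))) = (fun i => ((x i : X), f (x i))) := by
      funext i
      simp [hσ, Function.update_of_ne (hc i)]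
    have hσc : σ f c = !(f c) := by simp [hσ]
    rw [hF]
    simp only [hAeq, hσc]
    cases hA : A (fun i => ((x i : X), f (x i))) c <;> cases hfc : f c <;> simp [hA, hfc]
  have hsum : ∑ f : X → Bool, F (σ f) = ∑ f : X → Bool, F f :=
    Equiv.sum_comp hinv.toPerm F
  have h2 : 2 * ∑ f : X → Bool, F f = (Fintype.card (X → Bool) : ℝ) := by
    rw [two_mul]
    nth_rewrite 2 [← hsum]
    rw [← Finset.sum_add_distrib]
    simp [hkey, Finset.sum_const, Finset.card_univ]
  linarith

lemma exists_good_f {m : ℕ} (hm : 0 < m) (A : (Fin m → X × Bool) → X → Bool)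
    (t : Finset X) (htc : t.card = 2 * m) :
    ∃ f : X → Bool, (1/4 : ℝ) ≤
      ∑ x : Fin m → {y // y ∈ t}, ((t.card : ℝ)⁻¹)^m
        * risk t f (A (fun i => (↑(x i), f (x i)))) := by
  classical
  set K : ℝ := (Fintype.card (X → Bool) : ℝ) with hK
  have hK0 : 0 < K := by
    rw [hK]
    exact_mod_cast Fintype.card_pos
  set w : ℝ := (t.card : ℝ)⁻¹ with hw
  have hN : (t.card : ℝ) = 2 * m := by rw [htc]; push_cast; ring
  have hm0 : (0:ℝ) < m := by exact_mod_cast hm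
  have hw0 : 0 < w := by rw [hw, hN]; positivity
  have hx : ∀ x : Fin m → {y // y ∈ t},
      w^m * w * ((m : ℝ) * (K/2)) ≤
      ∑ f : X → Bool, w^m * risk t f (A (fun i => (↑(x i), f (x i)))) := by
    intro x
    have hcongr : ∀ f : X → Bool,
        w^m * risk t f (A (fun i => (↑(x i), f (x i))))
        = w^m * w * ∑ c ∈ t,
            (if A (fun i => (↑(x i), f (x i))) c ≠ f c then (1:ℝ) else 0) := by
      intro f; rw [risk_eq]; ring
    rw [Finset.sum_congr rfl (fun f _ => hcongr f), ← Finset.mul_sum, Finset.sum_comm]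
    set img : Finset X := Finset.univ.image (fun i => (x i : X)) with himg
    have himgcard : img.card ≤ m := by
      calc img.card ≤ (Finset.univ : Finset (Fin m)).card := Finset.card_image_le
        _ = m := by simp
    have hsub : (t \ img) ⊆ t := Finset.sdiff_subset
    have htx : m ≤ (t \ img).card := by
      have := Finset.le_card_sdiff img t
      omega
    have hstep1 : ∑ c ∈ t \ img, ∑ f : X → Bool,
          (if A (fun i => (↑(x i), f (x i))) c ≠ f c then (1:ℝ) else 0)
        ≤ ∑ c ∈ t, ∑ f : X → Bool,
          (if A (fun i => (↑(x i), f (x i))) c ≠ f c then (1:ℝ) else 0) := by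
      apply Finset.sum_le_sum_of_subset_of_nonneg hsub
      intro c _ _
      apply Finset.sum_nonneg
      intro f _
      split <;> norm_num
    have hstep2 : ∀ c ∈ t \ img, ∑ f : X → Bool,
        (if A (fun i => (↑(x i), f (x i))) c ≠ f c then (1:ℝ) else 0) = K/2 := by
      intro c hc
      apply flip_count
      intro i hi
      exact (Finset.mem_sdiff.1 hc).2 (Finset.mem_image.2 ⟨i, Finset.mem_univ i, hi⟩)
    have hstep3 : (m : ℝ) * (K/2) ≤ ∑ c ∈ t \ img, ∑ f : X → Bool,
        (if A (fun i => (↑(x i), f (x i))) c ≠ f c then (1:ℝ) else 0) := by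
      rw [Finset.sum_congr rfl hstep2, Finset.sum_const, nsmul_eq_mul]
      have : (m : ℝ) ≤ ((t \ img).card : ℝ) := by exact_mod_cast htx
      nlinarith
    have := hstep3.trans hstep1
    have hwpos : 0 < w^m * w := by positivity
    nlinarith
  have hcard : (Fintype.card (Fin m → {y // y ∈ t}) : ℝ) = (t.card : ℝ)^m := by
    rw [Fintype.card_fun, Fintype.card_coe, Fintype.card_fin]
    push_cast; ring
  have htotal : K/4 ≤ ∑ f : X → Bool, ∑ x : Fin m → {y // y ∈ t},
      w^m * risk t f (A (fun i => (↑(x i), f (x i)))) := by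
    rw [Finset.sum_comm]
    have h1 : ∑ x : Fin m → {y // y ∈ t}, (w^m * w * ((m : ℝ) * (K/2)))
        ≤ ∑ x : Fin m → {y // y ∈ t}, ∑ f : X → Bool,
            w^m * risk t f (A (fun i => (↑(x i), f (x i)))) :=
      Finset.sum_le_sum (fun x _ => hx x)
    rw [Finset.sum_const, nsmul_eq_mul, Finset.card_univ, hcard] at h1
    have hNw : (t.card : ℝ) * w = 1 := by
      rw [hw]
      field_simp [hN]
    have hNwm : (t.card : ℝ)^m * w^m = 1 := by
      rw [← mul_pow, hNw, one_pow]
    have heq : (t.card : ℝ)^m * (w^m * w * ((m : ℝ) * (K/2))) = K/4 := by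
      have h2 : (t.card : ℝ)^m * (w^m * w * ((m : ℝ) * (K/2)))
          = ((t.card : ℝ)^m * w^m) * (w * (m : ℝ)) * (K/2) := by ring
      rw [h2, hNwm, one_mul]
      have hwm : w * (m : ℝ) = 1/2 := by
        rw [hw, hN]
        field_simp
      rw [hwm]; ring
    linarith [h1, heq.symm.le]
  by_contra hcon
  push_neg at hcon
  have hlt : ∑ f : X → Bool, ∑ x : Fin m → {y // y ∈ t},
      w^m * risk t f (A (fun i => (↑(x i), f (x i))))
      < ∑ f : X → Bool, (1/4 : ℝ) :=
    Finset.sum_lt_sum_of_nonempty Finset.univ_nonempty (fun f _ => hcon f)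
  rw [Finset.sum_const, nsmul_eq_mul, Finset.card_univ] at hlt
  have : K * (1/4) = K/4 := by ring
  linarith

end NFLaux

open NFLaux in
/-- **No-Free-Lunch theorem.** For every deterministic learning algorithm `A` mapping labeled
samples of size `m` from a finite domain `X` to predictors `h : X → Bool`, if `m < |X|/2`
then there exist a function `f : X → Bool` and a probability distribution `D` over
`X × Bool` such that `L_D(f) = 0` and, with probability at least `1/7` over the draw of an
i.i.d. sample `S ~ D^m`, the predictor `A S` satisfies `L_D(A S) ≥ 1/8`. -/
theorem no_free_lunch
    (X : Type) [Fintype X] [DecidableEq X]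
    (m : ℕ) (hm : 0 < m) (hmX : 2 * m < Fintype.card X)
    (A : (Fin m → X × Bool) → X → Bool) :
    ∃ (D : X × Bool → ℝ) (f : X → Bool),
      (∀ p, 0 ≤ D p) ∧ (∑ p : X × Bool, D p) = 1 ∧
      -- the 0-1 risk of `f` under `D` is zero
      (∑ p : X × Bool, D p * (if f p.1 ≠ p.2 then 1 else 0)) = 0 ∧
      -- with probability at least 1/7 over `S ~ D^m`, the risk of `A S` is at least 1/8
      (1 / 7 : ℝ) ≤
        ∑ S : Fin m → X × Bool,
          (∏ i, D (S i)) *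
            (if (1 / 8 : ℝ) ≤
                ∑ p : X × Bool, D p * (if A S p.1 ≠ p.2 then 1 else 0)
             then 1 else 0) := by
  classical
  obtain ⟨t, -, htc⟩ : ∃ t ⊆ (Finset.univ : Finset X), t.card = 2 * m :=
    Finset.exists_subset_card_eq (by simpa using hmX.le)
  have ht : t.Nonempty := Finset.card_pos.1 (by omega)
  obtain ⟨f, hf⟩ := exists_good_f hm A t htc
  refine ⟨D t f, f, D_nonneg t f, sum_D t ht f, risk_self t f, ?_⟩
  -- expectation of the risk is at least 1/4
  have hE : (1/4 : ℝ) ≤ ∑ S : Fin m → X × Bool,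
      (∏ i, D t f (S i)) * risk t f (A S) := by
    rw [sum_prod_D t f (fun S => risk t f (A S))]
    exact hf
  -- total mass of the product measure is 1
  have hmass : ∑ S : Fin m → X × Bool, (∏ i, D t f (S i)) = 1 := by
    have h1 := sum_prod_D (m := m) t f (fun _ => (1:ℝ))
    simp only [mul_one] at h1
    rw [h1, Finset.sum_const, nsmul_eq_mul, Finset.card_univ]
    have hcard : (Fintype.card (Fin m → {y // y ∈ t}) : ℝ) = (t.card : ℝ)^m := by
      rw [Fintype.card_fun, Fintype.card_coe, Fintype.card_fin]
      push_cast; ring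
    rw [hcard, ← mul_pow]
    have htc0 : (t.card : ℝ) ≠ 0 := by
      have := Finset.card_pos.2 ht
      positivity
    rw [mul_inv_cancel₀ htc0, one_pow]
  -- Markov-type argument
  set P : ℝ := ∑ S : Fin m → X × Bool,
      (∏ i, D t f (S i)) * (if (1/8 : ℝ) ≤ risk t f (A S) then (1:ℝ) else 0) with hP
  have hpoint : ∀ S : Fin m → X × Bool,
      (∏ i, D t f (S i)) * risk t f (A S)
      ≤ (∏ i, D t f (S i)) * ((7/8) * (if (1/8 : ℝ) ≤ risk t f (A S) then (1:ℝ) else 0) + 1/8) := by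
    intro S
    have hW : 0 ≤ ∏ i, D t f (S i) := Finset.prod_nonneg (fun i _ => D_nonneg t f (S i))
    apply mul_le_mul_of_nonneg_left _ hW
    by_cases h : (1/8 : ℝ) ≤ risk t f (A S)
    · rw [if_pos h]
      have := risk_le_one t f (A S)
      linarith
    · rw [if_neg h]
      push_neg at h
      linarith
  have hsum : ∑ S : Fin m → X × Bool, (∏ i, D t f (S i)) * risk t f (A S)
      ≤ (7/8) * P + 1/8 := by
    calc ∑ S : Fin m → X × Bool, (∏ i, D t f (S i)) * risk t f (A S)
        ≤ ∑ S : Fin m → X × Bool, (∏ i, D t f (S i)) *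
            ((7/8) * (if (1/8 : ℝ) ≤ risk t f (A S) then (1:ℝ) else 0) + 1/8) :=
          Finset.sum_le_sum (fun S _ => hpoint S)
      _ = (7/8) * P + 1/8 := by
          have hring : ∀ S : Fin m → X × Bool,
              (∏ i, D t f (S i)) *
                ((7/8) * (if (1/8 : ℝ) ≤ risk t f (A S) then (1:ℝ) else 0) + 1/8)
              = (7/8) * ((∏ i, D t f (S i)) *
                  (if (1/8 : ℝ) ≤ risk t f (A S) then (1:ℝ) else 0))
                + (1/8) * (∏ i, D t f (S i)) := fun S => by ring
          rw [Finset.sum_congr rfl (fun S _ => hring S), Finset.sum_add_distrib,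
            ← Finset.mul_sum, ← Finset.mul_sum, hmass, hP]
          norm_num
  have hP17 : (1/7 : ℝ) ≤ P := by linarith
  -- identify risk with the sum in the statement
  have : P = ∑ S : Fin m → X × Bool,
      (∏ i, D t f (S i)) *
        (if (1/8 : ℝ) ≤ ∑ p : X × Bool, D t f p * (if A S p.1 ≠ p.2 then 1 else 0)
         then 1 else 0) := by
    rw [hP]; rfl
  rw [← this]
  convert hP17 using 2 <;> norm_num
end

section
/- Let C be a finite set with |C| = 2m and let A be any deterministic learning algorithm mapping labeled samples of size m from C to predictors h : C → {0,1}. Then max over all functions f : C → {0,1} of the expectation E_{S ~ D_f^m}[L_{D_f}(A(S))] is at least 1/4, where D_f is the uniform distribution over the graph {(x, f(x)) : x ∈ C}. -/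
open scoped BigOperators

/-- Let `C` be a finite set with `|C| = 2m` and let `A` be any deterministic learning algorithm
mapping labeled samples of size `m` from `C` to predictors `h : C → Bool`. Then the maximum over
all functions `f : C → Bool` of `E_{S ~ D_f^m}[L_{D_f}(A S)]` is at least `1/4`, where `D_f` is
the uniform distribution over the graph `{(x, f x) : x ∈ C}`: equivalently, some `f` attains
expected risk at least `1/4`.  Since `D_f` draws each coordinate uniformly from `C` and labels it
by `f`, the expectation over `S ~ D_f^m` is the average over all tuples `xs ∈ C^m` of
`L_{D_f}(A ((xs i, f (xs i))_i))`, and `L_{D_f}(h) = |{x : h x ≠ f x}| / |C|`. -/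
theorem no_free_lunch_expectation
    (C : Type) [Fintype C] [DecidableEq C]
    (m : ℕ) (hm : 0 < m) (hC : Fintype.card C = 2 * m)
    (A : (Fin m → C × Bool) → C → Bool) :
    ∃ f : C → Bool,
      (1 / 4 : ℝ) ≤
        (∑ xs : Fin m → C,
            ((Finset.univ.filter
                (fun c : C => A (fun i => (xs i, f (xs i))) c ≠ f c)).card : ℝ) /
              (Fintype.card C : ℝ)) / (Fintype.card C : ℝ) ^ m := by
  classical
  set n := Fintype.card C with hn
  have hnpos : 0 < n := by omega
  -- Key: for c outside the sample, mismatches happen for exactly half the f's.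
  have key : ∀ (xs : Fin m → C) (c : C), (∀ i, xs i ≠ c) →
      2 * ∑ f : C → Bool,
        (if A (fun i => (xs i, f (xs i))) c ≠ f c then (1:ℕ) else 0) = 2 ^ n := by
    intro xs c hc
    have hflip : Function.Involutive (fun f : C → Bool => Function.update f c (!(f c))) := by
      intro f
      funext x
      by_cases hx : x = c
      · subst hx; simp
      · simp [Function.update_of_ne hx]
    have hsum : ∑ f : C → Bool,
          (if A (fun i => (xs i, f (xs i))) c ≠ f c then (1:ℕ) else 0)
        = ∑ f : C → Bool,
          (if A (fun i => (xs i, f (xs i))) c = f c then (1:ℕ) else 0) := by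
      refine Fintype.sum_equiv (hflip.toPerm _) _ _ ?_
      intro f
      have hs : (fun i => (xs i, (hflip.toPerm _ f) (xs i))) = (fun i => (xs i, f (xs i))) := by
        funext i
        simp [Function.Involutive.toPerm, Function.update_of_ne (hc i)]
      have hv : (hflip.toPerm _ f) c = !(f c) := by
        simp [Function.Involutive.toPerm]
      rw [hs, hv]
      cases hA : A (fun i => (xs i, f (xs i))) c <;> cases hfc : f c <;> simp [hA, hfc]
    have htot : ∑ f : C → Bool,
          ((if A (fun i => (xs i, f (xs i))) c ≠ f c then (1:ℕ) else 0)
           + (if A (fun i => (xs i, f (xs i))) c = f c then (1:ℕ) else 0)) = 2 ^ n := by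
      have : ∀ f : C → Bool,
          (if A (fun i => (xs i, f (xs i))) c ≠ f c then (1:ℕ) else 0)
           + (if A (fun i => (xs i, f (xs i))) c = f c then (1:ℕ) else 0) = 1 := by
        intro f
        by_cases h : A (fun i => (xs i, f (xs i))) c = f c <;> simp [h]
      rw [Finset.sum_congr rfl (fun f _ => this f)]
      simp [Fintype.card_fun, hn]
    rw [two_mul]
    nth_rewrite 2 [hsum]
    rw [← Finset.sum_add_distrib]
    exact htot
  -- For each xs: 2 * ∑_f (mismatch count) ≥ m * 2^n
  have hxs : ∀ xs : Fin m → C,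
      m * 2 ^ n ≤ 2 * ∑ f : C → Bool,
        (Finset.univ.filter
          (fun c : C => A (fun i => (xs i, f (xs i))) c ≠ f c)).card := by
    intro xs
    have hcard : ∀ f : C → Bool,
        (Finset.univ.filter (fun c : C => A (fun i => (xs i, f (xs i))) c ≠ f c)).card
        = ∑ c : C, (if A (fun i => (xs i, f (xs i))) c ≠ f c then (1:ℕ) else 0) := by
      intro f
      rw [Finset.card_filter]
    calc m * 2 ^ n
        ≤ ∑ c ∈ Finset.univ \ Finset.image xs Finset.univ, 2 ^ n := by
          rw [Finset.sum_const, smul_eq_mul]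
          have h1 : (Finset.image xs Finset.univ).card ≤ m := by
            simpa using Finset.card_image_le (s := (Finset.univ : Finset (Fin m))) (f := xs)
          have h2 : (Finset.univ \ Finset.image xs Finset.univ).card
              = n - (Finset.image xs Finset.univ).card := by
            rw [Finset.card_sdiff_of_subset (Finset.subset_univ _)]
            rfl
          have : m ≤ (Finset.univ \ Finset.image xs Finset.univ).card := by omega
          exact Nat.mul_le_mul_right _ this
      _ = ∑ c ∈ Finset.univ \ Finset.image xs Finset.univ,
            2 * ∑ f : C → Bool,
              (if A (fun i => (xs i, f (xs i))) c ≠ f c then (1:ℕ) else 0) := by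
          refine Finset.sum_congr rfl ?_
          intro c hcmem
          have hc : ∀ i, xs i ≠ c := by
            intro i hi
            rw [Finset.mem_sdiff] at hcmem
            exact hcmem.2 (Finset.mem_image.2 ⟨i, Finset.mem_univ i, hi⟩)
          exact (key xs c hc).symm
      _ ≤ ∑ c : C, 2 * ∑ f : C → Bool,
              (if A (fun i => (xs i, f (xs i))) c ≠ f c then (1:ℕ) else 0) := by
          exact Finset.sum_le_sum_of_subset (Finset.sdiff_subset)
      _ = 2 * ∑ f : C → Bool,
            (Finset.univ.filter
              (fun c : C => A (fun i => (xs i, f (xs i))) c ≠ f c)).card := by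
          rw [← Finset.mul_sum, Finset.sum_comm]
          congr 1
          refine Finset.sum_congr rfl fun f _ => (hcard f).symm
  -- Sum the inequality over xs, then over f.
  have htotal : (n : ℕ) ^ m * (m * 2 ^ n) ≤ 2 * ∑ f : C → Bool, ∑ xs : Fin m → C,
      (Finset.univ.filter
        (fun c : C => A (fun i => (xs i, f (xs i))) c ≠ f c)).card := by
    rw [Finset.sum_comm, Finset.mul_sum]
    calc (n:ℕ) ^ m * (m * 2 ^ n) = ∑ _xs : Fin m → C, m * 2 ^ n := by
          rw [Finset.sum_const, smul_eq_mul]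
          congr 1
          simp [Fintype.card_fun, hn]
      _ ≤ _ := Finset.sum_le_sum fun xs _ => hxs xs
  -- Now conclude by averaging over f.
  by_contra hcon
  push_neg at hcon
  have hlt : ∑ f : C → Bool,
      ((∑ xs : Fin m → C,
            ((Finset.univ.filter
                (fun c : C => A (fun i => (xs i, f (xs i))) c ≠ f c)).card : ℝ) /
              (n : ℝ)) / (n : ℝ) ^ m)
      < ∑ _f : C → Bool, (1/4 : ℝ) :=
    Finset.sum_lt_sum_of_nonempty Finset.univ_nonempty fun f _ => hcon f
  have hle : ∑ _f : C → Bool, (1/4 : ℝ) ≤ ∑ f : C → Bool,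
      ((∑ xs : Fin m → C,
            ((Finset.univ.filter
                (fun c : C => A (fun i => (xs i, f (xs i))) c ≠ f c)).card : ℝ) /
              (n : ℝ)) / (n : ℝ) ^ m) := by
    have hnR : (0:ℝ) < (n:ℝ) := by exact_mod_cast hnpos
    have hpow : (0:ℝ) < (n:ℝ) ^ m := pow_pos hnR m
    have hEach : ∀ f : C → Bool,
        (∑ xs : Fin m → C,
            ((Finset.univ.filter
                (fun c : C => A (fun i => (xs i, f (xs i))) c ≠ f c)).card : ℝ) /
              (n : ℝ)) / (n : ℝ) ^ m
        = (∑ xs : Fin m → C,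
            ((Finset.univ.filter
                (fun c : C => A (fun i => (xs i, f (xs i))) c ≠ f c)).card : ℝ))
          / ((n:ℝ) * (n:ℝ) ^ m) := by
      intro f
      rw [← Finset.sum_div, div_div]
    have hcardfun : (Finset.univ : Finset (C → Bool)).card = 2 ^ n := by
      simp [Fintype.card_fun, hn]
    have hL : ∑ _f : C → Bool, (1/4 : ℝ) = (2:ℝ) ^ n / 4 := by
      rw [Finset.sum_const, hcardfun, nsmul_eq_mul]
      push_cast
      ring
    have hR : ∑ f : C → Bool,
        ((∑ xs : Fin m → C,
            ((Finset.univ.filter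
                (fun c : C => A (fun i => (xs i, f (xs i))) c ≠ f c)).card : ℝ))
          / ((n:ℝ) * (n:ℝ) ^ m))
        = (∑ f : C → Bool, ∑ xs : Fin m → C,
            ((Finset.univ.filter
                (fun c : C => A (fun i => (xs i, f (xs i))) c ≠ f c)).card : ℝ))
          / ((n:ℝ) * (n:ℝ) ^ m) := by
      rw [← Finset.sum_div]
    rw [Finset.sum_congr rfl fun f _ => hEach f, hR, hL,
      div_le_div_iff₀ (by norm_num) (by positivity)]
    -- goal: 2^n * (n * n^m) ≤ (∑ f ∑ xs card) * 4
    have hcast : ((n:ℝ) ^ m * (m * 2 ^ n) : ℝ) ≤ 2 * ∑ f : C → Bool, ∑ xs : Fin m → C,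
        ((Finset.univ.filter
          (fun c : C => A (fun i => (xs i, f (xs i))) c ≠ f c)).card : ℝ) := by
      exact_mod_cast htotal
    have hn2m : (n:ℝ) = 2 * m := by exact_mod_cast hC
    calc (2:ℝ) ^ n * ((n:ℝ) * (n:ℝ) ^ m)
        = 2 * ((n:ℝ) ^ m * (m * 2 ^ n)) := by rw [hn2m]; ring
      _ ≤ 2 * (2 * ∑ f : C → Bool, ∑ xs : Fin m → C,
            ((Finset.univ.filter
              (fun c : C => A (fun i => (xs i, f (xs i))) c ≠ f c)).card : ℝ)) := by
          linarith [hcast]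
      _ = (∑ f : C → Bool, ∑ xs : Fin m → C,
            ((Finset.univ.filter
              (fun c : C => A (fun i => (xs i, f (xs i))) c ≠ f c)).card : ℝ)) * 4 := by
          ring
  exact absurd hlt (not_lt.2 hle)
end

section
/- Let C be a finite set with |C| = 2m, A : (C × {0,1})^m → ({0,1}^C) any function, and (x_1, …, x_m) ∈ C^m a fixed sequence of points of C. Then the average over all 2^{|C|} functions f : C → {0,1} of L_{D_f}(A((x_1, f(x_1)), …, (x_m, f(x_m)))) is at least 1/4, where L_{D_f}(h) = (1/|C|) · |{x ∈ C : h(x) ≠ f(x)}|. -/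
open scoped BigOperators

/-- Let `C` be a finite set with `|C| = 2m`, `A : (C × Bool)^m → (C → Bool)` any function, and
`x : Fin m → C` a fixed sequence of points of `C`. Then the average over all `2^|C|` functions
`f : C → Bool` of `L_{D_f}(A ((x i, f (x i))_i))` is at least `1/4`, where
`L_{D_f}(h) = |{c ∈ C : h c ≠ f c}| / |C|`. -/
theorem average_risk_over_labelings
    (C : Type) [Fintype C] [DecidableEq C]
    (m : ℕ) (hm : 0 < m) (hC : Fintype.card C = 2 * m)
    (A : (Fin m → C × Bool) → C → Bool) (x : Fin m → C) :
    (1 / 4 : ℝ) ≤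
      (∑ f : C → Bool,
          ((Finset.univ.filter
              (fun c : C => A (fun i => (x i, f (x i))) c ≠ f c)).card : ℝ) /
            (Fintype.card C : ℝ)) / 2 ^ (Fintype.card C) := by
  classical
  set N := Fintype.card C with hN
  have hNpos : 0 < N := by omega
  -- key count per point c not in range x
  have key : ∀ c : C, (∀ i, x i ≠ c) →
      2 * (Finset.univ.filter (fun f : C → Bool =>
        A (fun i => (x i, f (x i))) c ≠ f c)).card = 2 ^ N := by
    intro c hc
    set P := fun f : C → Bool => A (fun i => (x i, f (x i))) c ≠ f c with hP
    have hApre : ∀ f : C → Bool,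
        (fun i => (x i, Function.update f c (!f c) (x i))) = (fun i => (x i, f (x i))) := by
      intro f; funext i
      simp [Function.update_of_ne (hc i)]
    have hflip : ∀ f, P (Function.update f c (!f c)) ↔ ¬ P f := by
      intro f
      simp only [hP, hApre f, Function.update_self]
      cases f c <;> cases A (fun i => (x i, f (x i))) c <;> simp
    have hinv : ∀ f : C → Bool,
        Function.update (Function.update f c (!f c)) c
          (!(Function.update f c (!f c)) c) = f := by
      intro f; funext a
      by_cases h : a = c
      · subst h; simp
      · simp [Function.update_of_ne h]
    have hbij : (Finset.univ.filter P).card = (Finset.univ.filter (fun f => ¬ P f)).card := by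
      refine Finset.card_bij' (fun f _ => Function.update f c (!f c))
        (fun f _ => Function.update f c (!f c)) ?_ ?_ ?_ ?_
      · intro f hf
        rw [Finset.mem_filter] at hf ⊢
        exact ⟨Finset.mem_univ _, fun h => ((hflip f).mp h) hf.2⟩
      · intro f hf
        rw [Finset.mem_filter] at hf ⊢
        exact ⟨Finset.mem_univ _, (hflip f).mpr hf.2⟩
      · intro f _; exact hinv f
      · intro f _; exact hinv f
    have hsplit : (Finset.univ.filter P).card + (Finset.univ.filter (fun f => ¬ P f)).card
        = 2 ^ N := by
      rw [Finset.card_filter_add_card_filter_not, Finset.card_univ,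
        Fintype.card_fun, Fintype.card_bool, hN]
    have h2 : 2 * (Finset.univ.filter P).card = 2 ^ N := by
      rw [two_mul]
      nth_rewrite 2 [hbij]
      exact hsplit
    exact h2
  -- double counting
  set T : ℕ := ∑ f : C → Bool,
    (Finset.univ.filter (fun c : C => A (fun i => (x i, f (x i))) c ≠ f c)).card with hT
  have hswap : T = ∑ c : C, (Finset.univ.filter (fun f : C → Bool =>
      A (fun i => (x i, f (x i))) c ≠ f c)).card := by
    simp only [hT, Finset.card_filter]
    exact Finset.sum_comm
  set Bad : Finset C := Finset.univ \ Finset.image x Finset.univ with hBad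
  have hBadcard : m ≤ Bad.card := by
    have h1 : (Finset.image x Finset.univ).card ≤ m := by
      calc (Finset.image x Finset.univ).card ≤ (Finset.univ : Finset (Fin m)).card :=
            Finset.card_image_le
        _ = m := by simp
    have h2 : Bad.card = N - (Finset.image x Finset.univ).card := by
      rw [hBad, Finset.card_sdiff_of_subset (Finset.subset_univ _), Finset.card_univ]
    clear_value N T Bad
    clear hT hswap
    omega
  have hlow : m * 2 ^ (N - 1) ≤ T := by
    have hterm : ∀ c ∈ Bad, 2 ^ (N - 1) = (Finset.univ.filter (fun f : C → Bool =>
        A (fun i => (x i, f (x i))) c ≠ f c)).card := by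
      intro c hcB
      have hc : ∀ i, x i ≠ c := by
        intro i hxi
        rw [hBad, Finset.mem_sdiff] at hcB
        exact hcB.2 (Finset.mem_image.mpr ⟨i, Finset.mem_univ i, hxi⟩)
      have := key c hc
      have h2N : 2 ^ N = 2 * 2 ^ (N - 1) := by
        rw [← pow_succ']
        congr 1
        exact (Nat.succ_pred_eq_of_pos hNpos).symm
      rw [h2N] at this
      exact (Nat.eq_of_mul_eq_mul_left two_pos this).symm
    calc m * 2 ^ (N - 1) ≤ Bad.card * 2 ^ (N - 1) :=
          Nat.mul_le_mul_right _ hBadcard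
      _ = ∑ c ∈ Bad, 2 ^ (N - 1) := by rw [Finset.sum_const, smul_eq_mul]
      _ = ∑ c ∈ Bad, (Finset.univ.filter (fun f : C → Bool =>
            A (fun i => (x i, f (x i))) c ≠ f c)).card := Finset.sum_congr rfl hterm
      _ ≤ ∑ c : C, (Finset.univ.filter (fun f : C → Bool =>
            A (fun i => (x i, f (x i))) c ≠ f c)).card :=
          Finset.sum_le_sum_of_subset (Finset.subset_univ _)
      _ = T := hswap.symm
  have hnat : N * 2 ^ N ≤ 4 * T := by
    have h2N : 2 ^ N = 2 * 2 ^ (N - 1) := by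
      rw [← pow_succ']; congr 1; clear_value N T Bad; clear hT hswap; omega
    calc N * 2 ^ N = 2 * m * (2 * 2 ^ (N - 1)) := by rw [← h2N, ← hC]
      _ = 4 * (m * 2 ^ (N - 1)) := by ring
      _ ≤ 4 * T := by clear_value N T Bad; clear hT hswap; omega
  -- conclude over ℝ
  have hsum : (∑ f : C → Bool,
      ((Finset.univ.filter
          (fun c : C => A (fun i => (x i, f (x i))) c ≠ f c)).card : ℝ) / (N : ℝ))
      = (T : ℝ) / (N : ℝ) := by
    rw [← Finset.sum_div, hT]
    push_cast
    ring
  rw [hsum, div_div, div_le_div_iff₀ (by norm_num) (by positivity)]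
  have : ((N * 2 ^ N : ℕ) : ℝ) ≤ ((4 * T : ℕ) : ℝ) := Nat.cast_le.mpr hnat
  push_cast at this
  linarith
end

section
/- Let X ∈ ℝ^{n×m} be a matrix, S ⊆ {1,…,m}, and θ* ∈ ℝ^m a vector whose support is contained in S. If X satisfies the restricted null space property with respect to S, i.e., the only vector θ with Xθ = 0 and ‖θ_{S^c}‖₁ ≤ ‖θ_S‖₁ is θ = 0, then θ* is the unique minimizer of ‖θ‖₁ over the affine set {θ ∈ ℝ^m : Xθ = Xθ*}; that is, every θ̂ with Xθ̂ = Xθ* and ‖θ̂‖₁ ≤ ‖θ*‖₁ equals θ*. -/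
open scoped BigOperators

/-- **Restricted null space property implies exact ℓ¹ recovery.** Let `X ∈ ℝ^{n×m}`,
`S ⊆ {1,…,m}`, and `θ* ∈ ℝ^m` a vector whose support is contained in `S`. If the only vector
`θ` with `Xθ = 0` and `‖θ_{Sᶜ}‖₁ ≤ ‖θ_S‖₁` is `θ = 0`, then every `θ̂` with `Xθ̂ = Xθ*` and
`‖θ̂‖₁ ≤ ‖θ*‖₁` equals `θ*`; i.e. `θ*` is the unique minimizer of `‖·‖₁` over
`{θ : Xθ = Xθ*}`. -/
theorem restricted_null_space_recovery
    (n m : ℕ) (X : Matrix (Fin n) (Fin m) ℝ) (S : Finset (Fin m))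
    (θstar : Fin m → ℝ) (hsupp : ∀ j ∉ S, θstar j = 0)
    (hRNSP : ∀ θ : Fin m → ℝ, X.mulVec θ = 0 →
      (∑ j ∈ Sᶜ, |θ j|) ≤ (∑ j ∈ S, |θ j|) → θ = 0) :
    ∀ θhat : Fin m → ℝ, X.mulVec θhat = X.mulVec θstar →
      (∑ j, |θhat j|) ≤ (∑ j, |θstar j|) → θhat = θstar := by
  intro θhat hX h1
  set Δ : Fin m → ℝ := fun j => θhat j - θstar j with hΔ
  have hXΔ : X.mulVec Δ = 0 := by
    have : X.mulVec Δ = X.mulVec θhat - X.mulVec θstar := by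
      have : Δ = θhat - θstar := rfl
      rw [this, Matrix.mulVec_sub]
    rw [this, hX, sub_self]
  have hsplit : ∀ f : Fin m → ℝ, (∑ j, f j) = (∑ j ∈ S, f j) + ∑ j ∈ Sᶜ, f j := by
    intro f
    rw [← Finset.sum_add_sum_compl S]
  have hcone : (∑ j ∈ Sᶜ, |Δ j|) ≤ ∑ j ∈ S, |Δ j| := by
    have hsc : ∀ j ∈ Sᶜ, |Δ j| = |θhat j| := by
      intro j hj
      simp [hΔ, hsupp j (Finset.mem_compl.mp hj)]
    have hstar0 : (∑ j ∈ Sᶜ, |θstar j|) = 0 :=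
      Finset.sum_eq_zero fun j hj => by simp [hsupp j (Finset.mem_compl.mp hj)]
    have h1' : (∑ j ∈ S, |θhat j|) + (∑ j ∈ Sᶜ, |θhat j|) ≤ ∑ j ∈ S, |θstar j| := by
      have := h1
      rw [hsplit (fun j => |θhat j|), hsplit (fun j => |θstar j|), hstar0, add_zero] at this
      exact this
    calc (∑ j ∈ Sᶜ, |Δ j|) = ∑ j ∈ Sᶜ, |θhat j| := Finset.sum_congr rfl hsc
      _ ≤ ∑ j ∈ S, (|θstar j| - |θhat j|) := by
          rw [Finset.sum_sub_distrib]; linarith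
      _ ≤ ∑ j ∈ S, |Δ j| := by
          apply Finset.sum_le_sum
          intro j _
          have := abs_sub_abs_le_abs_sub (θstar j) (θhat j)
          have h2 : |θstar j - θhat j| = |Δ j| := by rw [hΔ]; rw [abs_sub_comm]
          linarith
  have hΔ0 : Δ = 0 := hRNSP Δ hXΔ hcone
  funext j
  have := congrFun hΔ0 j
  simp [hΔ] at this
  linarith
end

section
/- Let F, H : ℝ^d → ℝ be twice continuously differentiable functions such that F has gradients bounded by G (‖∇F(θ)‖ ≤ G for all θ), ∇F is ς-Lipschitz, ∇²H is ρ-Lipschitz in operator norm, and σ I ⪯ ∇²H(θ) ⪯ ς I for all θ with 0 < σ ≤ ς. Define Q(θ) = θ − β∇H(θ) and G̃ = F ∘ Q. Then for any 0 < β ≤ 1/ς and all θ₁, θ₂ ∈ ℝ^d, ‖∇G̃(θ₁) − ∇G̃(θ₂)‖ ≤ (βρG + (1 − βσ)² ς)·‖θ₁ − θ₂‖. -/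
open scoped RealInnerProductSpace
open InnerProductSpace

private lemma symm_op_bound' {E : Type*} [NormedAddCommGroup E] [InnerProductSpace ℝ E]
    (M : E →L[ℝ] E) (c : ℝ) (hc0 : 0 ≤ c)
    (hsym : ∀ u v : E, ⟪M u, v⟫ = ⟪u, M v⟫)
    (h0 : ∀ v : E, 0 ≤ ⟪v, M v⟫)
    (hc : ∀ v : E, ⟪v, M v⟫ ≤ c * ‖v‖ ^ 2)
    (v : E) : ‖M v‖ ≤ c * ‖v‖ := by
  have key : ∀ u w : E, ⟪M u, w⟫ ≤ c / 2 * (‖u‖ ^ 2 + ‖w‖ ^ 2) := by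
    intro u w
    have hs : ⟪u, M w⟫ = ⟪M u, w⟫ := by
      rw [real_inner_comm, hsym w u, real_inner_comm]
    have e1 : ⟪u + w, M (u + w)⟫ = ⟪u, M u⟫ + 2 * ⟪M u, w⟫ + ⟪w, M w⟫ := by
      rw [map_add]
      simp only [inner_add_left, inner_add_right]
      rw [show ⟪u, M w⟫ = ⟪M u, w⟫ from hs,
        show ⟪w, M u⟫ = ⟪M u, w⟫ from real_inner_comm (M u) w]
      ring
    have e2 : ⟪u - w, M (u - w)⟫ = ⟪u, M u⟫ - 2 * ⟪M u, w⟫ + ⟪w, M w⟫ := by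
      rw [map_sub]
      simp only [inner_sub_left, inner_sub_right]
      rw [show ⟪u, M w⟫ = ⟪M u, w⟫ from hs,
        show ⟪w, M u⟫ = ⟪M u, w⟫ from real_inner_comm (M u) w]
      ring
    have h1 : ⟪u + w, M (u + w)⟫ ≤ c * ‖u + w‖ ^ 2 := hc _
    have h2 : 0 ≤ ⟪u - w, M (u - w)⟫ := h0 _
    have hn : ‖u + w‖ ^ 2 ≤ 2 * (‖u‖ ^ 2 + ‖w‖ ^ 2) := by
      have := norm_add_sq_real u w
      have := real_inner_le_norm u w
      nlinarith [norm_nonneg u, norm_nonneg w, sq_nonneg (‖u‖ - ‖w‖)]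
    nlinarith
  by_cases hv : M v = 0
  · rw [hv, norm_zero]; positivity
  · have hMv : 0 < ‖M v‖ := norm_pos_iff.mpr hv
    have hvne : v ≠ 0 := by rintro rfl; simp at hv
    have hvpos : 0 < ‖v‖ := norm_pos_iff.mpr hvne
    have := key v ((‖v‖ / ‖M v‖) • M v)
    rw [real_inner_smul_right, real_inner_self_eq_norm_sq, norm_smul] at this
    have habs : ‖(‖v‖ / ‖M v‖ : ℝ)‖ = ‖v‖ / ‖M v‖ := by
      rw [Real.norm_eq_abs, abs_of_nonneg (by positivity)]
    rw [habs] at this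
    have h3 : ‖v‖ / ‖M v‖ * ‖M v‖ ^ 2 = ‖v‖ * ‖M v‖ := by field_simp
    have h4 : (‖v‖ / ‖M v‖ * ‖M v‖) ^ 2 = ‖v‖ ^ 2 := by field_simp
    rw [h3, h4] at this
    nlinarith

private lemma grad_fderiv_inner' {d : ℕ} {H : EuclideanSpace ℝ (Fin d) → ℝ} (hH : ContDiff ℝ 2 H)
    (x u v : EuclideanSpace ℝ (Fin d)) :
    ⟪fderiv ℝ (gradient H) x u, v⟫ = fderiv ℝ (fderiv ℝ H) x u v := by
  have hfH1 : ContDiff ℝ 1 (fderiv ℝ H) := hH.fderiv_right (by norm_num)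
  have hgH : Differentiable ℝ (gradient H) :=
    (((toDual ℝ (EuclideanSpace ℝ (Fin d))).symm.contDiff).comp hfH1).differentiable one_ne_zero
  have hfH : Differentiable ℝ (fderiv ℝ H) := hfH1.differentiable one_ne_zero
  have heq : (fun y => ((innerSL ℝ (E := EuclideanSpace ℝ (Fin d))).flip v) (gradient H y)) =
      fun y => (ContinuousLinearMap.apply ℝ ℝ v) (fderiv ℝ H y) := by
    funext y
    simp only [ContinuousLinearMap.flip_apply, innerSL_apply_apply,
      ContinuousLinearMap.apply_apply]
    exact toDual_symm_apply
  have h1 : fderiv ℝ (fun y => ((innerSL ℝ (E := EuclideanSpace ℝ (Fin d))).flip v)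
        (gradient H y)) x =
      ((innerSL ℝ (E := EuclideanSpace ℝ (Fin d))).flip v).comp (fderiv ℝ (gradient H) x) :=
    (((innerSL ℝ (E := EuclideanSpace ℝ (Fin d))).flip v).hasFDerivAt.comp x
      (hgH x).hasFDerivAt).fderiv
  have h2 : fderiv ℝ (fun y => (ContinuousLinearMap.apply ℝ ℝ v) (fderiv ℝ H y)) x =
      (ContinuousLinearMap.apply ℝ ℝ v).comp (fderiv ℝ (fderiv ℝ H) x) :=
    ((ContinuousLinearMap.apply ℝ ℝ v).hasFDerivAt.comp x (hfH x).hasFDerivAt).fderiv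
  have h3 : ((innerSL ℝ (E := EuclideanSpace ℝ (Fin d))).flip v).comp
      (fderiv ℝ (gradient H) x) =
      (ContinuousLinearMap.apply ℝ ℝ v).comp (fderiv ℝ (fderiv ℝ H) x) := by
    rw [← h1, heq, h2]
  have h4 := ContinuousLinearMap.ext_iff.mp h3 u
  simp only [ContinuousLinearMap.comp_apply, ContinuousLinearMap.flip_apply, innerSL_apply_apply,
    ContinuousLinearMap.apply_apply] at h4
  exact h4

set_option maxHeartbeats 1000000 in
/-- **Smoothness of the meta-objective.** Let `F, H : ℝ^d → ℝ` be twice continuously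
differentiable such that `F` has gradients bounded by `G`, `∇F` is `ς`-Lipschitz, `∇²H` is
`ρ`-Lipschitz in operator norm, and `σ I ⪯ ∇²H(θ) ⪯ ς I` for all `θ` with `0 < σ ≤ ς`. Define
`Q(θ) = θ − β∇H(θ)` and `G̃ = F ∘ Q`. Then for any `0 < β ≤ 1/ς` and all `θ₁, θ₂`,
`‖∇G̃(θ₁) − ∇G̃(θ₂)‖ ≤ (βρG + (1 − βσ)² ς)‖θ₁ − θ₂‖`. -/
theorem meta_objective_smooth
    {d : ℕ} (F H : EuclideanSpace ℝ (Fin d) → ℝ) (G ρ σ ς β : ℝ)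
    (hσ : 0 < σ) (hσς : σ ≤ ς)
    (hF : ContDiff ℝ 2 F) (hH : ContDiff ℝ 2 H)
    (hG : ∀ θ, ‖gradient F θ‖ ≤ G)
    (hFlip : ∀ θ₁ θ₂, ‖gradient F θ₁ - gradient F θ₂‖ ≤ ς * ‖θ₁ - θ₂‖)
    (hHlip : ∀ θ₁ θ₂ : EuclideanSpace ℝ (Fin d),
      ‖fderiv ℝ (gradient H) θ₁ - fderiv ℝ (gradient H) θ₂‖ ≤ ρ * ‖θ₁ - θ₂‖)
    (hHhess : ∀ θ v : EuclideanSpace ℝ (Fin d),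
      σ * ‖v‖ ^ 2 ≤ ⟪v, fderiv ℝ (gradient H) θ v⟫ ∧
        ⟪v, fderiv ℝ (gradient H) θ v⟫ ≤ ς * ‖v‖ ^ 2)
    (hβ0 : 0 < β) (hβ : β ≤ 1 / ς)
    (θ₁ θ₂ : EuclideanSpace ℝ (Fin d)) :
    ‖gradient (fun θ => F (θ - β • gradient H θ)) θ₁
        - gradient (fun θ => F (θ - β • gradient H θ)) θ₂‖
      ≤ (β * ρ * G + (1 - β * σ) ^ 2 * ς) * ‖θ₁ - θ₂‖ := by
  rcases eq_or_ne θ₁ θ₂ with rfl | hne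
  · simp
  -- basic numeric facts
  have hς : 0 < ς := lt_of_lt_of_le hσ hσς
  have hβς : β * ς ≤ 1 := by
    calc β * ς ≤ (1 / ς) * ς := by gcongr
    _ = 1 := by field_simp
  have hβσ : β * σ ≤ 1 := le_trans (by gcongr) hβς
  have h1βσ : 0 ≤ 1 - β * σ := by linarith
  have hρ : 0 ≤ ρ := by
    have h := hHlip θ₁ θ₂
    have h2 : (0:ℝ) < ‖θ₁ - θ₂‖ := by
      rw [norm_pos_iff, sub_ne_zero]; exact hne
    nlinarith [norm_nonneg (fderiv ℝ (gradient H) θ₁ - fderiv ℝ (gradient H) θ₂)]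
  have hGnn : 0 ≤ G := le_trans (norm_nonneg _) (hG θ₁)
  -- differentiability facts
  have hfH1 : ContDiff ℝ 1 (fderiv ℝ H) := hH.fderiv_right (by norm_num)
  have hgH : Differentiable ℝ (gradient H) :=
    (((toDual ℝ (EuclideanSpace ℝ (Fin d))).symm.contDiff).comp hfH1).differentiable one_ne_zero
  set Q : EuclideanSpace ℝ (Fin d) → EuclideanSpace ℝ (Fin d) :=
    fun θ => θ - β • gradient H θ with hQdef
  have hQdiff : Differentiable ℝ Q := differentiable_id.sub (hgH.const_smul β)
  have hFdiff : Differentiable ℝ F := hF.differentiable two_ne_zero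
  -- Hessian symmetry
  have hsymm : ∀ (x u v : EuclideanSpace ℝ (Fin d)),
      ⟪fderiv ℝ (gradient H) x u, v⟫ = ⟪u, fderiv ℝ (gradient H) x v⟫ := by
    intro x u v
    rw [grad_fderiv_inner' hH, real_inner_comm, grad_fderiv_inner' hH]
    exact (hH.contDiffAt.isSymmSndFDerivAt (by simp)) u v
  -- fderiv of Q
  have hfQ : ∀ x, fderiv ℝ Q x =
      ContinuousLinearMap.id ℝ (EuclideanSpace ℝ (Fin d)) - β • fderiv ℝ (gradient H) x := by
    intro x
    rw [hQdef]
    rw [fderiv_fun_sub differentiableAt_fun_id ((hgH x).fun_const_smul β), fderiv_fun_id,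
      fderiv_fun_const_smul (hgH x) β]
  -- bound ‖(I - β A) v‖ ≤ (1 - βσ)‖v‖
  have hMbound : ∀ (x v : EuclideanSpace ℝ (Fin d)),
      ‖(ContinuousLinearMap.id ℝ (EuclideanSpace ℝ (Fin d)) - β • fderiv ℝ (gradient H) x) v‖
        ≤ (1 - β * σ) * ‖v‖ := by
    intro x
    apply symm_op_bound' _ _ h1βσ
    · intro u v
      simp only [ContinuousLinearMap.sub_apply, ContinuousLinearMap.id_apply,
        ContinuousLinearMap.smul_apply, inner_sub_left, inner_sub_right,
        real_inner_smul_left, real_inner_smul_right]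
      rw [hsymm x u v]
    · intro v
      have h := (hHhess x v).2
      simp only [ContinuousLinearMap.sub_apply, ContinuousLinearMap.id_apply,
        ContinuousLinearMap.smul_apply, inner_sub_right, real_inner_smul_right,
        real_inner_self_eq_norm_sq]
      nlinarith [sq_nonneg ‖v‖]
    · intro v
      have h := (hHhess x v).1
      simp only [ContinuousLinearMap.sub_apply, ContinuousLinearMap.id_apply,
        ContinuousLinearMap.smul_apply, inner_sub_right, real_inner_smul_right,
        real_inner_self_eq_norm_sq]
      nlinarith
  -- Q is (1-βσ)-Lipschitz
  have hQlip : ‖Q θ₁ - Q θ₂‖ ≤ (1 - β * σ) * ‖θ₁ - θ₂‖ := by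
    apply Convex.norm_image_sub_le_of_norm_fderiv_le
      (fun x _ => (hQdiff x)) _ convex_univ (Set.mem_univ θ₂) (Set.mem_univ θ₁)
    intro x _
    rw [hfQ x]
    exact ContinuousLinearMap.opNorm_le_bound _ h1βσ (hMbound x)
  -- gradient of the composition
  have hgrad : ∀ x v, ⟪gradient (fun θ => F (θ - β • gradient H θ)) x, v⟫
      = ⟪gradient F (Q x), fderiv ℝ Q x v⟫ := by
    intro x v
    have hcomp : fderiv ℝ (fun θ => F (θ - β • gradient H θ)) x =
        (fderiv ℝ F (Q x)).comp (fderiv ℝ Q x) :=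
      fderiv_comp x (hFdiff (Q x)) (hQdiff x)
    have lhs : ⟪gradient (fun θ => F (θ - β • gradient H θ)) x, v⟫
        = fderiv ℝ (fun θ => F (θ - β • gradient H θ)) x v := toDual_symm_apply
    have rhs : ⟪gradient F (Q x), fderiv ℝ Q x v⟫ = fderiv ℝ F (Q x) (fderiv ℝ Q x v) :=
      toDual_symm_apply
    rw [lhs, rhs, hcomp]
    rfl
  set g : EuclideanSpace ℝ (Fin d) := gradient (fun θ => F (θ - β • gradient H θ)) θ₁
      - gradient (fun θ => F (θ - β • gradient H θ)) θ₂ with hgdef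
  -- key inner product bound
  have hkey : ∀ v, ⟪g, v⟫ ≤ (β * ρ * G + (1 - β * σ) ^ 2 * ς) * ‖θ₁ - θ₂‖ * ‖v‖ := by
    intro v
    rw [hgdef, inner_sub_left, hgrad θ₁ v, hgrad θ₂ v]
    set A₁ := fderiv ℝ (gradient H) θ₁
    set A₂ := fderiv ℝ (gradient H) θ₂
    have hsplit : ⟪gradient F (Q θ₁), fderiv ℝ Q θ₁ v⟫ - ⟪gradient F (Q θ₂), fderiv ℝ Q θ₂ v⟫
        = ⟪gradient F (Q θ₁), fderiv ℝ Q θ₁ v - fderiv ℝ Q θ₂ v⟫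
          + ⟪gradient F (Q θ₁) - gradient F (Q θ₂), fderiv ℝ Q θ₂ v⟫ := by
      rw [inner_sub_right, inner_sub_left]; ring
    rw [hsplit]
    have hdiff : fderiv ℝ Q θ₁ v - fderiv ℝ Q θ₂ v = -(β • ((A₁ - A₂) v)) := by
      rw [hfQ θ₁, hfQ θ₂]
      simp only [ContinuousLinearMap.sub_apply, ContinuousLinearMap.id_apply,
        ContinuousLinearMap.smul_apply, smul_sub]
      abel
    have hb1 : ⟪gradient F (Q θ₁), fderiv ℝ Q θ₁ v - fderiv ℝ Q θ₂ v⟫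
        ≤ G * (β * (ρ * ‖θ₁ - θ₂‖ * ‖v‖)) := by
      refine le_trans (real_inner_le_norm _ _) ?_
      have h1 : ‖fderiv ℝ Q θ₁ v - fderiv ℝ Q θ₂ v‖ = β * ‖(A₁ - A₂) v‖ := by
        rw [hdiff, norm_neg, norm_smul, Real.norm_eq_abs, abs_of_pos hβ0]
      have h2 : ‖(A₁ - A₂) v‖ ≤ ρ * ‖θ₁ - θ₂‖ * ‖v‖ := by
        refine le_trans ((A₁ - A₂).le_opNorm v) ?_
        gcongr
        exact hHlip θ₁ θ₂
      rw [h1]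
      refine mul_le_mul (hG (Q θ₁)) ?_ (by positivity) hGnn
      exact mul_le_mul_of_nonneg_left h2 hβ0.le
    have hb2 : ⟪gradient F (Q θ₁) - gradient F (Q θ₂), fderiv ℝ Q θ₂ v⟫
        ≤ (ς * ((1 - β * σ) * ‖θ₁ - θ₂‖)) * ((1 - β * σ) * ‖v‖) := by
      refine le_trans (real_inner_le_norm _ _) ?_
      have h1 : ‖gradient F (Q θ₁) - gradient F (Q θ₂)‖ ≤ ς * ((1 - β * σ) * ‖θ₁ - θ₂‖) := by
        refine le_trans (hFlip (Q θ₁) (Q θ₂)) ?_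
        gcongr
      have h2 : ‖fderiv ℝ Q θ₂ v‖ ≤ (1 - β * σ) * ‖v‖ := by
        rw [hfQ θ₂]; exact hMbound θ₂ v
      have := mul_le_mul h1 h2 (norm_nonneg _) (by positivity)
      exact this
    have := add_le_add hb1 hb2
    refine le_trans this (le_of_eq ?_)
    ring
  -- conclude
  have hsq : ‖g‖ ^ 2 ≤ (β * ρ * G + (1 - β * σ) ^ 2 * ς) * ‖θ₁ - θ₂‖ * ‖g‖ := by
    rw [← real_inner_self_eq_norm_sq]
    exact hkey g
  have hK : 0 ≤ (β * ρ * G + (1 - β * σ) ^ 2 * ς) * ‖θ₁ - θ₂‖ := by positivity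
  nlinarith [norm_nonneg g]
end

section
/- Let Z be a measurable space, D a probability measure on Z, n ≥ 1, H a measurable space of hypotheses, A : Z^n → H a measurable algorithm, and ℓ : H × Z → ℝ a bounded measurable loss. Suppose A is ξ-uniformly stable: for every pair of samples S, S' ∈ Z^n that differ in exactly one coordinate and every z ∈ Z, |ℓ(A(S), z) − ℓ(A(S'), z)| ≤ ξ. Then the expected generalization gap satisfies E_{S ~ D^n}[ L_D(A(S)) − L̂_S(A(S)) ] ≤ ξ, where L_D(h) = E_{z ~ D}[ℓ(h, z)] is the population loss and L̂_S(h) = (1/n)·Σ_{i=1}^n ℓ(h, z_i) is the empirical loss on the sample S = (z_1, …, z_n). -/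
open MeasureTheory
open scoped BigOperators

open Set in
lemma measurable_update_pair {Z : Type*} [MeasurableSpace Z] {n : ℕ} (i : Fin n) :
    Measurable (fun p : (Fin n → Z) × Z => Function.update p.1 i p.2) := by
  rw [measurable_pi_iff]
  intro j
  by_cases hj : j = i
  · subst hj; simpa [Function.update_self] using measurable_snd
  · simpa [Function.update_of_ne hj, Function.comp_def] using (measurable_pi_apply j).comp measurable_fst

lemma map_update_pi {Z : Type*} [MeasurableSpace Z] (D : Measure Z) [IsProbabilityMeasure D]
    {n : ℕ} (i : Fin n) :
    MeasurePreserving (fun p : (Fin n → Z) × Z => Function.update p.1 i p.2)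
      ((Measure.pi fun _ : Fin n => D).prod D) (Measure.pi fun _ : Fin n => D) := by
  refine ⟨measurable_update_pair i, ?_⟩
  refine (Measure.pi_eq fun s hs => ?_).symm
  rw [Measure.map_apply (measurable_update_pair i) (MeasurableSet.univ_pi hs)]
  have hpre : (fun p : (Fin n → Z) × Z => Function.update p.1 i p.2) ⁻¹' (Set.pi Set.univ s)
      = (Set.pi {i}ᶜ s) ×ˢ (s i) := by
    ext ⟨S, z⟩
    simp only [Set.mem_preimage, Set.mem_pi, Set.mem_univ, forall_true_left, Set.mem_prod,
      Set.mem_compl_iff, Set.mem_singleton_iff]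
    constructor
    · intro h
      exact ⟨fun j hj => by simpa [Function.update_of_ne hj] using h j, by simpa using h i⟩
    · rintro ⟨h1, h2⟩ j
      by_cases hj : j = i
      · subst hj; simpa using h2
      · simpa [Function.update_of_ne hj] using h1 j hj
  rw [hpre, Measure.prod_prod]
  have h1 : (Measure.pi fun _ : Fin n => D) (Set.pi {i}ᶜ s)
      = ∏ j ∈ Finset.univ \ {i}, D (s j) := by
    have hset : Set.pi {i}ᶜ s = Set.pi Set.univ (Function.update s i Set.univ) := by
      ext x
      simp only [Set.mem_pi, Set.mem_univ, forall_true_left, Set.mem_compl_iff,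
        Set.mem_singleton_iff]
      constructor
      · intro h j
        by_cases hj : j = i
        · subst hj; simp
        · simpa [Function.update_of_ne hj] using h j hj
      · intro h j hj
        simpa [Function.update_of_ne hj] using h j
    rw [hset, Measure.pi_pi]
    have : ∀ j, D (Function.update s i Set.univ j)
        = Function.update (fun j => D (s j)) i 1 j := by
      intro j
      by_cases hj : j = i
      · subst hj; simp
      · simp [Function.update_of_ne hj]
    rw [Finset.prod_congr rfl fun j _ => this j, Finset.prod_update_of_mem (Finset.mem_univ i),
      one_mul]
  rw [h1, mul_comm]
  exact (Finset.prod_eq_mul_prod_sdiff_singleton_of_mem (Finset.mem_univ i) fun j => D (s j)).symm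

lemma integrable_of_abs_le {α : Type*} [MeasurableSpace α] (μ : Measure α) [IsFiniteMeasure μ]
    {g : α → ℝ} (hg : Measurable g) {B : ℝ} (h : ∀ x, |g x| ≤ B) : Integrable g μ :=
  ⟨hg.aestronglyMeasurable,
    HasFiniteIntegral.of_bounded (C := B) (Filter.Eventually.of_forall fun x => by
      simpa using h x)⟩


/-- **Uniform stability implies generalization in expectation.** Let `Z` be a measurable space,
`D` a probability measure on `Z`, `n ≥ 1`, `H` a measurable space of hypotheses,
`A : Z^n → H` a measurable algorithm, and `ℓ : H × Z → ℝ` a bounded measurable loss. If `A` is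
`ξ`-uniformly stable (replacing one coordinate of the sample changes the loss at any point by at
most `ξ`), then `E_{S ~ D^n}[L_D(A S) − L̂_S(A S)] ≤ ξ`, where `L_D(h) = E_{z ~ D}[ℓ(h, z)]`
and `L̂_S(h) = (1/n) Σ_i ℓ(h, S_i)`. -/
theorem uniform_stability_generalization
    {Z H : Type*} [MeasurableSpace Z] [MeasurableSpace H]
    (D : Measure Z) [IsProbabilityMeasure D]
    (n : ℕ) (hn : 1 ≤ n)
    (A : (Fin n → Z) → H) (hA : Measurable A)
    (ℓ : H × Z → ℝ) (hℓ : Measurable ℓ)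
    (B : ℝ) (hbdd : ∀ p, |ℓ p| ≤ B)
    (ξ : ℝ)
    (hstable : ∀ S S' : Fin n → Z,
      (∃ i : Fin n, ∀ j : Fin n, j ≠ i → S j = S' j) →
      ∀ z : Z, |ℓ (A S, z) - ℓ (A S', z)| ≤ ξ) :
    (∫ S, ((∫ z, ℓ (A S, z) ∂D) - (1 / (n : ℝ)) * ∑ i, ℓ (A S, S i))
        ∂(Measure.pi fun _ : Fin n => D)) ≤ ξ := by
  set π : Measure (Fin n → Z) := Measure.pi fun _ : Fin n => D with hπ
  have hπprob : IsProbabilityMeasure π := by infer_instance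
  set μ2 : Measure ((Fin n → Z) × Z) := π.prod D with hμ2
  have hμ2prob : IsProbabilityMeasure μ2 := by infer_instance
  -- measurability facts
  have hF : Measurable fun p : (Fin n → Z) × Z => ℓ (A p.1, p.2) :=
    hℓ.comp ((hA.comp measurable_fst).prodMk measurable_snd)
  have hFi : ∀ i : Fin n,
      Measurable fun p : (Fin n → Z) × Z => ℓ (A (Function.update p.1 i p.2), p.2) := fun i =>
    hℓ.comp ((hA.comp (measurable_update_pair i)).prodMk measurable_snd)
  have hg : ∀ i : Fin n, Measurable fun S : Fin n → Z => ℓ (A S, S i) := fun i =>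
    hℓ.comp (hA.prodMk (measurable_pi_apply i))
  -- integrability facts
  have hIF : Integrable (fun p : (Fin n → Z) × Z => ℓ (A p.1, p.2)) μ2 :=
    integrable_of_abs_le μ2 hF fun p => hbdd _
  have hIFi : ∀ i : Fin n,
      Integrable (fun p : (Fin n → Z) × Z => ℓ (A (Function.update p.1 i p.2), p.2)) μ2 :=
    fun i => integrable_of_abs_le μ2 (hFi i) fun p => hbdd _
  have hIg : ∀ i : Fin n, Integrable (fun S : Fin n → Z => ℓ (A S, S i)) π :=
    fun i => integrable_of_abs_le π (hg i) fun S => hbdd _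
  have hIL : Integrable (fun S : Fin n → Z => ∫ z, ℓ (A S, z) ∂D) π := by
    refine integrable_of_abs_le π ?_ (B := B) ?_
    · exact (hF.stronglyMeasurable.integral_prod_right').measurable
    · intro S
      calc |∫ z, ℓ (A S, z) ∂D| ≤ B * (D Set.univ).toReal := by
            rw [← Real.norm_eq_abs]
            apply norm_integral_le_of_norm_le_const
            exact Filter.Eventually.of_forall fun z => by simpa using hbdd (A S, z)
        _ = B := by simp
  have hsum : Integrable (fun S : Fin n → Z => (1 / (n : ℝ)) * ∑ i, ℓ (A S, S i)) π :=
    (integrable_finset_sum Finset.univ fun i _ => hIg i).const_mul _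
  -- Fubini
  have hfubini : ∫ S, ∫ z, ℓ (A S, z) ∂D ∂π = ∫ p, ℓ (A p.1, p.2) ∂μ2 :=
    (integral_prod _ hIF).symm
  -- exchangeability
  have key : ∀ i : Fin n, ∫ S, ℓ (A S, S i) ∂π
      = ∫ p, ℓ (A (Function.update p.1 i p.2), p.2) ∂μ2 := by
    intro i
    have hmp := map_update_pi D i
    calc ∫ S, ℓ (A S, S i) ∂π
        = ∫ S, ℓ (A S, S i)
            ∂(Measure.map (fun p : (Fin n → Z) × Z => Function.update p.1 i p.2) μ2) := by
          rw [hmp.map_eq]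
      _ = ∫ p, ℓ (A (Function.update p.1 i p.2), Function.update p.1 i p.2 i) ∂μ2 := by
          rw [integral_map (measurable_update_pair i).aemeasurable]
          exact (hg i).aestronglyMeasurable
      _ = ∫ p, ℓ (A (Function.update p.1 i p.2), p.2) ∂μ2 := by
          simp [Function.update_self]
  -- pointwise stability bound
  have hterm : ∀ i : Fin n,
      (∫ p, ℓ (A p.1, p.2) ∂μ2) - ∫ p, ℓ (A (Function.update p.1 i p.2), p.2) ∂μ2 ≤ ξ := by
    intro i
    rw [← integral_sub hIF (hIFi i)]
    calc (∫ p, ℓ (A p.1, p.2) - ℓ (A (Function.update p.1 i p.2), p.2) ∂μ2)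
        ≤ ∫ _, ξ ∂μ2 := by
          refine integral_mono (hIF.sub (hIFi i)) (integrable_const ξ) fun p => ?_
          exact (abs_le.1 (hstable p.1 (Function.update p.1 i p.2)
            ⟨i, fun j hj => (Function.update_of_ne hj _ _).symm⟩ p.2)).2
      _ = ξ := by simp
  -- assemble
  rw [integral_sub hIL hsum, integral_const_mul,
    integral_finset_sum Finset.univ fun i _ => hIg i, hfubini]
  have hkey : ∑ i : Fin n, ∫ S, ℓ (A S, S i) ∂π
      = ∑ i : Fin n, ∫ p, ℓ (A (Function.update p.1 i p.2), p.2) ∂μ2 :=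
    Finset.sum_congr rfl fun i _ => key i
  rw [hkey]
  have hne : (n : ℝ) ≠ 0 := by positivity
  set IF := ∫ p, ℓ (A p.1, p.2) ∂μ2 with hIFdef
  calc IF - (1 / (n : ℝ)) * ∑ i : Fin n, ∫ p, ℓ (A (Function.update p.1 i p.2), p.2) ∂μ2
      = (1 / (n : ℝ)) * ∑ i : Fin n,
          (IF - ∫ p, ℓ (A (Function.update p.1 i p.2), p.2) ∂μ2) := by
        rw [Finset.sum_sub_distrib, Finset.sum_const, Finset.card_univ, Fintype.card_fin]
        field_simp
        ring
    _ ≤ (1 / (n : ℝ)) * ∑ _i : Fin n, ξ := by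
        refine mul_le_mul_of_nonneg_left (Finset.sum_le_sum fun i _ => hterm i) (by positivity)
    _ = ξ := by
        rw [Finset.sum_const, Finset.card_univ, Fintype.card_fin, nsmul_eq_mul]
        field_simp
end
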